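/- Let A be a P×M complex matrix with ordered column rank K satisfying K < M, and A = QR a QR decomposition. Then the diagonal entry R_{K+1,K+1} equals 0. -/

import Mathlib

open Matrix

/-- Generalized QR decomposition: `A = Q * R`, the nonzero columns of `Q` are
orthonormal, `R` is upper triangular with real nonnegative diagonal, and `R = Qᴴ * A`. -/
def IsQR {P M : ℕ} (A Q : Matrix (Fin P) (Fin M) ℂ)
    (R : Matrix (Fin M) (Fin M) ℂ) : Prop :=
  A = Q * R ∧
  (∀ i j : Fin M, (fun p => Q p i) ≠ 0 → (fun p => Q p j) ≠ 0 →
      (Qᴴ * Q) i j = if i = j then 1 else 0) ∧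
  (∀ i j : Fin M, j < i → R i j = 0) ∧
  (∀ i : Fin M, (R i i).im = 0 ∧ 0 ≤ (R i i).re) ∧
  R = Qᴴ * A

/-- Rank of the matrix formed by the first `k` columns of `A` (for `k ≤ M`). -/
noncomputable def firstColsRank {P M : ℕ} (A : Matrix (Fin P) (Fin M) ℂ) (k : ℕ) : ℕ :=
  (Matrix.of fun (p : Fin P) (j : Fin (min k M)) =>
    A p (Fin.castLE (min_le_right k M) j)).rank

/-- `K` is the ordered column rank of `A`: the largest `k` such that the
first `k` columns of `A` have rank `k`. -/
def OrderedColRank {P M : ℕ} (A : Matrix (Fin P) (Fin M) ℂ) (K : ℕ) : Prop :=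
  K ≤ M ∧ firstColsRank A K = K ∧ ∀ k, K < k → k ≤ M → firstColsRank A k ≠ k

theorem qr_diag_zero_at_K_succ {P M K : ℕ}
    (A Q : Matrix (Fin P) (Fin M) ℂ) (R : Matrix (Fin M) (Fin M) ℂ)
    (hK : OrderedColRank A K) (hKM : K < M)
    (hQR : IsQR A Q R) :
    R ⟨K, hKM⟩ ⟨K, hKM⟩ = 0 := by
  obtain ⟨hA, hOrth, hLow, hDiag, hR⟩ := hQR
  by_contra hRne
  have hKM' : K + 1 ≤ M := hKM
  set i0 : Fin M := ⟨K, hKM⟩ with hi0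
  -- the linear functional x ↦ ⟨Q_{i0}, x⟩
  let φ : (Fin P → ℂ) →ₗ[ℂ] ℂ :=
    { toFun := fun x => ∑ p, star (Q p i0) * x p
      map_add' := by
        intro x y
        simp [mul_add, Finset.sum_add_distrib]
      map_smul' := by
        intro c x
        simp [Finset.mul_sum, mul_left_comm] }
  have hφ : ∀ j : Fin M, φ (fun p => A p j) = R i0 j := by
    intro j
    have : (Qᴴ * A) i0 j = ∑ p, star (Q p i0) * A p j := by
      simp [Matrix.mul_apply, Matrix.conjTranspose_apply]
    rw [hR, this]
    rfl
  -- the family of the first K+1 columns of A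
  set v : Fin (K + 1) → (Fin P → ℂ) :=
    fun j => fun p => A p ⟨j.1, lt_of_lt_of_le j.isLt hKM'⟩ with hv
  -- the first K columns are linearly independent
  have h1 : min K M = K := min_eq_left hK.1
  have hBind : LinearIndependent ℂ (Fin.init v) := by
    have hrank : firstColsRank A K = K := hK.2.1
    rw [firstColsRank, Matrix.rank_eq_finrank_span_cols] at hrank
    have hli : LinearIndependent ℂ
        (Matrix.col (Matrix.of fun (p : Fin P) (j : Fin (min K M)) =>
          A p (Fin.castLE (min_le_right K M) j))) := by
      rw [linearIndependent_iff_card_eq_finrank_span]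
      rw [Set.finrank]
      simp [hrank, h1]
    have := hli.comp (Fin.cast h1.symm) (Fin.cast_injective _)
    convert this using 1
    rfl
  -- the (K+1)-st column is not in their span
  have hnotmem : v (Fin.last K) ∉ Submodule.span ℂ (Set.range (Fin.init v)) := by
    intro hmem
    have hsub : Submodule.span ℂ (Set.range (Fin.init v)) ≤ LinearMap.ker φ := by
      rw [Submodule.span_le]
      rintro x ⟨j, rfl⟩
      have : Fin.init v j = fun p => A p ⟨j.1, lt_trans j.isLt hKM⟩ := rfl
      simp only [SetLike.mem_coe, LinearMap.mem_ker, this]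
      rw [hφ]
      exact hLow i0 _ j.isLt
    have h0 : φ (v (Fin.last K)) = 0 := hsub hmem
    have : v (Fin.last K) = fun p => A p i0 := rfl
    rw [this, hφ] at h0
    exact hRne h0
  have hvind : LinearIndependent ℂ v :=
    linearIndependent_fin_succ'.2 ⟨hBind, hnotmem⟩
  -- hence the first K+1 columns have rank K+1, contradiction
  have h2 : min (K + 1) M = K + 1 := min_eq_left hKM'
  have hCli : LinearIndependent ℂ
      (Matrix.col (Matrix.of fun (p : Fin P) (j : Fin (min (K + 1) M)) =>
        A p (Fin.castLE (min_le_right (K + 1) M) j))) := by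
    have := hvind.comp (Fin.cast h2) (Fin.cast_injective _)
    convert this using 1
    rfl
  have hrank2 : firstColsRank A (K + 1) = K + 1 := by
    rw [firstColsRank, Matrix.rank_eq_finrank_span_cols]
    have := linearIndependent_iff_card_eq_finrank_span.1 hCli
    rw [Set.finrank] at this
    simp [h2] at this ⊢
    omega
  exact hK.2.2 (K + 1) (Nat.lt_succ_self K) hKM' hrank2
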